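/- If G is a tree (a finite connected acyclic simple graph), then L⊠_V(G)=L⊠_E(G), L×_V(G)=L×_E(G), and L□_V(G)=L□_E(G). -/

import Mathlib

open SimpleGraph

/-- An `l`-track on `G`: a surjective function whose consecutive values are adjacent. -/
def IsTrack {V : Type*} (G : SimpleGraph V) {l : ℕ} (f : Fin l → V) : Prop :=
  Function.Surjective f ∧
    ∀ i : ℕ, ∀ hi : i + 1 < l, G.Adj (f ⟨i, Nat.lt_of_succ_lt hi⟩) (f ⟨i + 1, hi⟩)

/-- A lazy `l`-track on `G`: consecutive values are adjacent or equal. -/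
def IsLazyTrack {V : Type*} (G : SimpleGraph V) {l : ℕ} (f : Fin l → V) : Prop :=
  Function.Surjective f ∧
    ∀ i : ℕ, ∀ hi : i + 1 < l,
      G.Adj (f ⟨i, Nat.lt_of_succ_lt hi⟩) (f ⟨i + 1, hi⟩) ∨
        f ⟨i, Nat.lt_of_succ_lt hi⟩ = f ⟨i + 1, hi⟩

/-- The condition that every edge of `G` is traversed by `f`. -/
def SweepCond {V : Type*} (G : SimpleGraph V) {l : ℕ} (f : Fin l → V) : Prop :=
  ∀ e ∈ G.edgeSet, ∃ i : ℕ, ∃ hi : i + 1 < l,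
    e = s(f ⟨i, Nat.lt_of_succ_lt hi⟩, f ⟨i + 1, hi⟩)

/-- An `l`-sweep on `G`: an `l`-track traversing every edge. -/
def IsSweep {V : Type*} (G : SimpleGraph V) {l : ℕ} (f : Fin l → V) : Prop :=
  IsTrack G f ∧ SweepCond G f

/-- A lazy `l`-sweep on `G`: a lazy `l`-track traversing every edge. -/
def IsLazySweep {V : Type*} (G : SimpleGraph V) {l : ℕ} (f : Fin l → V) : Prop :=
  IsLazyTrack G f ∧ SweepCond G f

/-- `f` and `g` are opposite: at each step exactly `f` moves iff `g` stays. -/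
def IsOpposite {V : Type*} (G : SimpleGraph V) {l : ℕ} (f g : Fin l → V) : Prop :=
  ∀ i : ℕ, ∀ hi : i + 1 < l,
    (G.Adj (f ⟨i, Nat.lt_of_succ_lt hi⟩) (f ⟨i + 1, hi⟩) ↔
      g ⟨i, Nat.lt_of_succ_lt hi⟩ = g ⟨i + 1, hi⟩)

/-- The distance `m_G(f,g)`: minimal distance between simultaneous positions. -/
noncomputable def mDist {V : Type*} (G : SimpleGraph V) {l : ℕ} (f g : Fin l → V) : ℕ :=
  sInf {d | ∃ i : Fin l, G.dist (f i) (g i) = d}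

/-- Strong vertex span `σ⊠_V(G)`. -/
noncomputable def strongVertexSpan {V : Type*} (G : SimpleGraph V) : ℕ :=
  sSup {d | ∃ (l : ℕ) (f g : Fin l → V), IsLazyTrack G f ∧ IsLazyTrack G g ∧ mDist G f g = d}

/-- Direct vertex span `σ×_V(G)`. -/
noncomputable def directVertexSpan {V : Type*} (G : SimpleGraph V) : ℕ :=
  sSup {d | ∃ (l : ℕ) (f g : Fin l → V), IsTrack G f ∧ IsTrack G g ∧ mDist G f g = d}

/-- Cartesian vertex span `σ□_V(G)`. -/
noncomputable def cartesianVertexSpan {V : Type*} (G : SimpleGraph V) : ℕ :=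
  sSup {d | ∃ (l : ℕ) (f g : Fin l → V),
    IsLazyTrack G f ∧ IsLazyTrack G g ∧ IsOpposite G f g ∧ mDist G f g = d}

/-- Strong edge span `σ⊠_E(G)`. -/
noncomputable def strongEdgeSpan {V : Type*} (G : SimpleGraph V) : ℕ :=
  sSup {d | ∃ (l : ℕ) (f g : Fin l → V), IsLazySweep G f ∧ IsLazySweep G g ∧ mDist G f g = d}

/-- Direct edge span `σ×_E(G)`. -/
noncomputable def directEdgeSpan {V : Type*} (G : SimpleGraph V) : ℕ :=
  sSup {d | ∃ (l : ℕ) (f g : Fin l → V), IsSweep G f ∧ IsSweep G g ∧ mDist G f g = d}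

/-- Cartesian edge span `σ□_E(G)`. -/
noncomputable def cartesianEdgeSpan {V : Type*} (G : SimpleGraph V) : ℕ :=
  sSup {d | ∃ (l : ℕ) (f g : Fin l → V),
    IsLazySweep G f ∧ IsLazySweep G g ∧ IsOpposite G f g ∧ mDist G f g = d}

/-- `L⊠_V(G)`: minimal length of lazy tracks realizing the strong vertex span. -/
noncomputable def strongVertexL {V : Type*} (G : SimpleGraph V) : ℕ :=
  sInf {l | ∃ f g : Fin l → V,
    IsLazyTrack G f ∧ IsLazyTrack G g ∧ mDist G f g = strongVertexSpan G}

/-- `L×_V(G)`. -/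
noncomputable def directVertexL {V : Type*} (G : SimpleGraph V) : ℕ :=
  sInf {l | ∃ f g : Fin l → V,
    IsTrack G f ∧ IsTrack G g ∧ mDist G f g = directVertexSpan G}

/-- `L□_V(G)`. -/
noncomputable def cartesianVertexL {V : Type*} (G : SimpleGraph V) : ℕ :=
  sInf {l | ∃ f g : Fin l → V,
    IsLazyTrack G f ∧ IsLazyTrack G g ∧ IsOpposite G f g ∧ mDist G f g = cartesianVertexSpan G}

/-- `L⊠_E(G)`. -/
noncomputable def strongEdgeL {V : Type*} (G : SimpleGraph V) : ℕ :=
  sInf {l | ∃ f g : Fin l → V,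
    IsLazySweep G f ∧ IsLazySweep G g ∧ mDist G f g = strongEdgeSpan G}

/-- `L×_E(G)`. -/
noncomputable def directEdgeL {V : Type*} (G : SimpleGraph V) : ℕ :=
  sInf {l | ∃ f g : Fin l → V,
    IsSweep G f ∧ IsSweep G g ∧ mDist G f g = directEdgeSpan G}

/-- `L□_E(G)`. -/
noncomputable def cartesianEdgeL {V : Type*} (G : SimpleGraph V) : ℕ :=
  sInf {l | ∃ f g : Fin l → V,
    IsLazySweep G f ∧ IsLazySweep G g ∧ IsOpposite G f g ∧ mDist G f g = cartesianEdgeSpan G}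


section Aux
variable {V : Type*} {G : SimpleGraph V}

lemma lazyTrack_sweepCond (hG : G.IsAcyclic) {l : ℕ} {f : Fin l → V}
    (hf : IsLazyTrack G f) : SweepCond G f := by
  intro e he
  induction e using Sym2.ind with
  | _ u v =>
  have huv : G.Adj u v := he
  by_contra hno
  push_neg at hno
  have hbr : G.IsBridge s(u, v) :=
    (isAcyclic_iff_forall_adj_isBridge.mp hG) huv
  rw [SimpleGraph.isBridge_iff] at hbr
  apply hbr
  -- all values of f are reachable from f 0 in G \ fromEdgeSet {s(u,v)}
  have hl : 0 < l := by
    rcases hf.1 u with ⟨i, _⟩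
    exact i.pos
  have key : ∀ n : ℕ, ∀ hn : n < l,
      (G \ SimpleGraph.fromEdgeSet {s(u, v)}).Reachable (f ⟨0, hl⟩) (f ⟨n, hn⟩) := by
    intro n
    induction n with
    | zero => intro hn; rfl
    | succ m ih =>
      intro hn
      have hm : m < l := Nat.lt_of_succ_lt hn
      refine (ih hm).trans ?_
      rcases hf.2 m hn with hadj | heq
      · refine SimpleGraph.Adj.reachable ?_
        simp only [SimpleGraph.sdiff_adj, SimpleGraph.fromEdgeSet_adj]
        refine ⟨hadj, ?_⟩
        rintro ⟨h1, -⟩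
        exact hno m hn h1.symm
      · rw [heq]
  rcases hf.1 u with ⟨i, hi⟩
  rcases hf.1 v with ⟨j, hj⟩
  have h1 := key i.1 i.2
  have h2 := key j.1 j.2
  simp only [Fin.eta] at h1 h2
  rw [hi] at h1; rw [hj] at h2
  exact h1.symm.trans h2

lemma isLazySweep_iff (hG : G.IsAcyclic) {l : ℕ} {f : Fin l → V} :
    IsLazySweep G f ↔ IsLazyTrack G f :=
  ⟨fun h => h.1, fun h => ⟨h, lazyTrack_sweepCond hG h⟩⟩

lemma isSweep_iff (hG : G.IsAcyclic) {l : ℕ} {f : Fin l → V} :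
    IsSweep G f ↔ IsTrack G f :=
  ⟨fun h => h.1, fun h => ⟨h, lazyTrack_sweepCond hG ⟨h.1, fun i hi => Or.inl (h.2 i hi)⟩⟩⟩

lemma strongSpan_eq (hG : G.IsAcyclic) : strongVertexSpan G = strongEdgeSpan G := by
  unfold strongVertexSpan strongEdgeSpan
  congr 1
  ext d
  simp only [Set.mem_setOf_eq, isLazySweep_iff hG]

lemma directSpan_eq (hG : G.IsAcyclic) : directVertexSpan G = directEdgeSpan G := by
  unfold directVertexSpan directEdgeSpan
  congr 1
  ext d
  simp only [Set.mem_setOf_eq, isSweep_iff hG]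

lemma cartesianSpan_eq (hG : G.IsAcyclic) : cartesianVertexSpan G = cartesianEdgeSpan G := by
  unfold cartesianVertexSpan cartesianEdgeSpan
  congr 1
  ext d
  simp only [Set.mem_setOf_eq, isLazySweep_iff hG]

end Aux

theorem stmt11 {V : Type*} [Fintype V] (G : SimpleGraph V) (hG : G.IsTree) :
    strongVertexL G = strongEdgeL G ∧
      directVertexL G = directEdgeL G ∧
        cartesianVertexL G = cartesianEdgeL G := by
  have hA := hG.IsAcyclic
  refine ⟨?_, ?_, ?_⟩
  · unfold strongVertexL strongEdgeL
    congr 1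
    ext l
    simp only [Set.mem_setOf_eq, isLazySweep_iff hA, strongSpan_eq hA]
  · unfold directVertexL directEdgeL
    congr 1
    ext l
    simp only [Set.mem_setOf_eq, isSweep_iff hA, directSpan_eq hA]
  · unfold cartesianVertexL cartesianEdgeL
    congr 1
    ext l
    simp only [Set.mem_setOf_eq, isLazySweep_iff hA, cartesianSpan_eq hA]
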